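/- Let G be a compact topological group with Haar probability measure λ. For y ∈ G let ν_y be the pushforward of λ under x ↦ (x, x·y), and for a finite Borel partition ℰ of G let ν_{y,ℰ}(D) = Σ_{E ∈ ℰ, λ(E)>0} (λ⊗λ)(D ∩ (E × (E·y)))/λ(E). Then the net (ν_{y,ℰ})_ℰ, indexed by finite Borel partitions ordered by refinement, converges to ν_y in the weak* topology on probability measures on G × G. -/

import Mathlib

open MeasureTheory Filter Classical

/-- A finite Borel partition of a topological measurable space `G`. -/
structure BorelPartition (G : Type*) [TopologicalSpace G] [MeasurableSpace G] where
  parts : Finset (Set G)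
  meas : ∀ E ∈ parts, MeasurableSet E
  disj : (parts : Set (Set G)).PairwiseDisjoint id
  cover : ⋃₀ (parts : Set (Set G)) = Set.univ

/-- Finite Borel partitions ordered by refinement: `P ≤ Q` iff `Q` refines `P`. -/
instance {G : Type*} [TopologicalSpace G] [MeasurableSpace G] :
    Preorder (BorelPartition G) where
  le P Q := ∀ F ∈ Q.parts, ∃ E ∈ P.parts, F ⊆ E
  le_refl P := fun F hF => ⟨F, hF, subset_rfl⟩
  le_trans P Q R hPQ hQR := fun F hF => by
    obtain ⟨E, hE, hFE⟩ := hQR F hF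
    obtain ⟨D, hD, hED⟩ := hPQ E hE
    exact ⟨D, hD, hFE.trans hED⟩

/-- The measure `ν_{y,P}` on `G × G` associated to `y ∈ G` and a finite Borel
partition `P`. -/
noncomputable def partMeasure {G : Type*} [Group G] [TopologicalSpace G]
    [MeasurableSpace G] (lam : Measure G) (y : G) (P : BorelPartition G) :
    Measure (G × G) :=
  ∑ E ∈ P.parts.filter (fun E => lam E ≠ 0),
    (lam E)⁻¹ • ((lam.prod lam).restrict (E ×ˢ ((· * y) '' E)))

section Meas

variable {G : Type*} [TopologicalSpace G] [CompactSpace G] [T2Space G]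
  [MeasurableSpace G] [BorelSpace G]

lemma continuous_prod_measurable (f : C(G × G, ℝ)) : Measurable f := by
  classical
  let A : Subalgebra ℝ C(G × G, ℝ) :=
    { carrier := {h : C(G × G, ℝ) | Measurable (h : G × G → ℝ)}
      mul_mem' := fun hf hg => hf.mul hg
      add_mem' := fun hf hg => hf.add hg
      algebraMap_mem' := fun c => measurable_const }
  have hA : A.SeparatesPoints := by
    rintro ⟨p1, p2⟩ ⟨q1, q2⟩ hpq
    have h : p1 ≠ q1 ∨ p2 ≠ q2 := by
      by_contra h; push_neg at h; exact hpq (Prod.ext h.1 h.2)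
    rcases h with h | h
    · obtain ⟨g, hg0, hg1, -⟩ := exists_continuous_zero_one_of_isClosed
        (isClosed_singleton (x := p1)) (isClosed_singleton (x := q1))
        (by simpa using h)
      refine ⟨_, ⟨g.comp ⟨Prod.fst, continuous_fst⟩, ?_, rfl⟩, ?_⟩
      · exact g.continuous.measurable.comp measurable_fst
      · simpa [hg0 (Set.mem_singleton p1), hg1 (Set.mem_singleton q1)] using one_ne_zero
    · obtain ⟨g, hg0, hg1, -⟩ := exists_continuous_zero_one_of_isClosed
        (isClosed_singleton (x := p2)) (isClosed_singleton (x := q2))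
        (by simpa using h)
      refine ⟨_, ⟨g.comp ⟨Prod.snd, continuous_snd⟩, ?_, rfl⟩, ?_⟩
      · exact g.continuous.measurable.comp measurable_snd
      · simpa [hg0 (Set.mem_singleton p2), hg1 (Set.mem_singleton q2)] using one_ne_zero
  have key : ∀ n : ℕ, ∃ g : A, ∀ x, ‖(g : C(G × G, ℝ)) x - f x‖ < 1 / (n + 1) := fun n =>
    ContinuousMap.exists_mem_subalgebra_near_continuous_of_separatesPoints A hA f
      f.continuous (1 / (n + 1)) (by positivity)
  choose u hu using key
  have hmeas : ∀ n : ℕ, Measurable ((u n : C(G × G, ℝ)) : G × G → ℝ) := fun n => (u n).2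
  apply measurable_of_tendsto_metrizable' (f := fun n => ((u n : C(G × G, ℝ)) : G × G → ℝ))
    atTop hmeas
  rw [tendsto_pi_nhds]
  intro x
  have h0 : Tendsto (fun n : ℕ => 1 / ((n : ℝ) + 1)) atTop (nhds 0) :=
    tendsto_one_div_add_atTop_nhds_zero_nat
  have : Tendsto (fun n : ℕ => (u n : C(G × G, ℝ)) x - f x) atTop (nhds 0) := by
    apply squeeze_zero_norm (fun n => (hu n x).le) h0
  simpa using this.add_const (f x)

end Meas

section Part

variable {G : Type*} [Group G] [TopologicalSpace G] [IsTopologicalGroup G]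
  [CompactSpace G] [T2Space G] [MeasurableSpace G] [BorelSpace G]

lemma exists_good_partition (f : C(G × G, ℝ)) (y : G) {ε : ℝ} (hε : 0 < ε) :
    ∃ P₀ : BorelPartition G, ∀ E ∈ P₀.parts, ∀ x ∈ E, ∀ x' ∈ E,
      |f (x, x' * y) - f (x, x * y)| ≤ ε := by
  classical
  set h : G × G → ℝ := fun p => |f (p.1, p.1 * p.2 * y) - f (p.1, p.1 * y)| with hh
  have hcont : Continuous h := by
    apply Continuous.abs
    exact (f.continuous.comp (by continuity)).sub (f.continuous.comp (by continuity))
  set K : Set (G × G) := {p | ε ≤ h p} with hK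
  have hKc : IsClosed K := isClosed_le continuous_const hcont
  have hKcp : IsCompact K := hKc.isCompact
  set W : Set G := (Prod.snd '' K)ᶜ with hWdef
  have hWo : IsOpen W := (hKcp.image continuous_snd).isClosed.isOpen_compl
  have hW1 : (1 : G) ∈ W := by
    rintro ⟨p, hpK, hp2⟩
    have h0 : h p = 0 := by
      rw [hh]
      simp only [hp2, mul_one, sub_self, abs_zero]
    rw [hK] at hpK
    simp only [Set.mem_setOf_eq, h0] at hpK
    linarith
  have hW : ∀ u ∈ W, ∀ x : G, |f (x, x * u * y) - f (x, x * y)| < ε := by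
    intro u hu x
    by_contra hcon
    push_neg at hcon
    exact hu ⟨(x, u), hcon, rfl⟩
  have hm : Continuous fun p : G × G => p.1⁻¹ * p.2 := by continuity
  have hnh : {p : G × G | p.1⁻¹ * p.2 ∈ W} ∈ nhds ((1 : G), (1 : G)) :=
    hm.continuousAt.preimage_mem_nhds (by simpa using hWo.mem_nhds hW1)
  rw [mem_nhds_prod_iff] at hnh
  obtain ⟨V₁, hV₁, V₂, hV₂, hV⟩ := hnh
  obtain ⟨O, hOsub, hOopen, hO1⟩ := mem_nhds_iff.mp (Filter.inter_mem hV₁ hV₂)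
  have hOW : ∀ a ∈ O, ∀ b ∈ O, a⁻¹ * b ∈ W := fun a ha b hb =>
    hV (Set.mk_mem_prod (hOsub ha).1 (hOsub hb).2)
  set c : G → Set G := fun g => (fun z => g⁻¹ * z) ⁻¹' O with hc
  have hcopen : ∀ g, IsOpen (c g) := fun g => hOopen.preimage (by continuity)
  obtain ⟨t, ht⟩ := isCompact_univ.elim_finite_subcover c hcopen
    (fun x _ => Set.mem_iUnion.mpr ⟨x, by simp [hc, hO1]⟩)
  set l := t.toList with hl
  set N := l.length with hN
  set s : ℕ → Set G := fun n => if hn : n < N then c (l.get ⟨n, hn⟩) else ∅ with hs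
  have hsmeas : ∀ n, MeasurableSet (s n) := fun n => by
    by_cases hn : n < N
    · simp only [hs, dif_pos hn]; exact (hcopen _).measurableSet
    · simp only [hs, dif_neg hn]; exact MeasurableSet.empty
  set d := disjointed s with hd
  have hdsub : ∀ n, d n ⊆ s n := fun n => disjointed_subset s n
  have hcover : ⋃ n, s n = Set.univ := by
    apply Set.eq_univ_of_forall
    intro x
    have hx := ht (Set.mem_univ x)
    rw [Set.mem_iUnion₂] at hx
    obtain ⟨g, hgt, hgx⟩ := hx
    have hgl : g ∈ l := by rw [hl]; exact Finset.mem_toList.mpr hgt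
    rw [List.mem_iff_get] at hgl
    obtain ⟨i, hi⟩ := hgl
    refine Set.mem_iUnion.mpr ⟨i, ?_⟩
    have hiN : (i : ℕ) < N := i.isLt
    simp only [hs, dif_pos hiN]
    have : l.get ⟨(i : ℕ), hiN⟩ = g := by
      rw [← hi]
    rw [this]
    exact hgx
  refine ⟨⟨(Finset.range N).image d, ?_, ?_, ?_⟩, ?_⟩
  · intro E hE
    obtain ⟨n, -, rfl⟩ := Finset.mem_image.mp hE
    exact MeasurableSet.disjointed hsmeas n
  · intro a ha b hb hab
    rw [Finset.coe_image] at ha hb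
    obtain ⟨n, -, rfl⟩ := ha
    obtain ⟨m, -, rfl⟩ := hb
    have hnm : n ≠ m := fun e => hab (by rw [e])
    exact disjoint_disjointed s hnm
  · rw [Finset.coe_image, Set.sUnion_image]
    have h1 : ⋃ n ∈ (Finset.range N : Set ℕ), d n = ⋃ n, d n := by
      apply Set.Subset.antisymm (Set.iUnion₂_subset fun n _ => Set.subset_iUnion d n)
      intro x hx
      obtain ⟨n, hn⟩ := Set.mem_iUnion.mp hx
      have hnN : n < N := by
        by_contra hnN
        have he : s n = ∅ := dif_neg hnN
        have := hdsub n hn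
        rw [he] at this
        exact this
      exact Set.mem_iUnion₂.mpr ⟨n, by simpa using hnN, hn⟩
    rw [h1, hd, iUnion_disjointed, hcover]
  · intro E hE x hx x' hx'
    obtain ⟨n, -, rfl⟩ := Finset.mem_image.mp hE
    have hxs := hdsub n hx
    have hx's := hdsub n hx'
    by_cases hn : n < N
    · rw [show s n = c (l.get ⟨n, hn⟩) from dif_pos hn] at hxs hx's
      set g := l.get ⟨n, hn⟩
      have hu : x⁻¹ * x' ∈ W := by
        have := hOW _ hxs _ hx's
        have he : (g⁻¹ * x)⁻¹ * (g⁻¹ * x') = x⁻¹ * x' := by group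
        rwa [he] at this
      have hlt := hW _ hu x
      have hxx' : x * (x⁻¹ * x') = x' := by group
      rw [hxx'] at hlt
      exact hlt.le
    · have he : s n = ∅ := dif_neg hn
      rw [he] at hxs
      exact absurd hxs (Set.notMem_empty x)

end Part

section Core

variable {G : Type*} [Group G] [TopologicalSpace G] [IsTopologicalGroup G]
  [CompactSpace G] [T2Space G] [MeasurableSpace G] [BorelSpace G]

lemma integral_partPiece (lam : Measure G) [IsProbabilityMeasure lam]
    [lam.IsMulRightInvariant] (y : G) (f : C(G × G, ℝ)) (hfm : Measurable f)
    (hfi : Integrable f (lam.prod lam)) {E : Set G} (hE : MeasurableSet E) :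
    ∫ z, f z ∂((lam.prod lam).restrict (E ×ˢ ((· * y) '' E)))
      = ∫ x in E, ∫ x' in E, f (x, x' * y) ∂lam ∂lam := by
  have himg : ((· * y) '' E) = (fun z => z * y⁻¹) ⁻¹' E := Set.image_mul_right
  have hF : MeasurableSet ((· * y) '' E) := by
    rw [himg]; exact (measurable_mul_const y⁻¹) hE
  have hint : Integrable f ((lam.restrict E).prod (lam.restrict ((· * y) '' E))) := by
    rw [Measure.prod_restrict]
    exact hfi.restrict
  rw [← Measure.prod_restrict, integral_prod f hint]
  have inner : ∀ x : G, ∫ z in ((· * y) '' E), f (x, z) ∂lam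
      = ∫ x' in E, f (x, x' * y) ∂lam := by
    intro x
    have hsm : AEStronglyMeasurable (fun z => f (x, z)) (Measure.map (· * y) lam) := by
      rw [map_mul_right_eq_self]
      exact (hfm.comp measurable_prodMk_left).aestronglyMeasurable
    have hpre : ((· * y) ⁻¹' ((· * y) '' E)) = E := by
      rw [himg]; ext x'; simp
    conv_lhs => rw [← map_mul_right_eq_self lam y]
    rw [setIntegral_map hF hsm (measurable_mul_const y).aemeasurable, hpre]
  simp_rw [inner]

end Core

/-- The net `(ν_{y,P})_P`, indexed by finite Borel partitions ordered by refinement,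
converges weak* to the pushforward `ν_y` of the Haar measure `λ` under `x ↦ (x, x·y)`. -/
theorem stmt9 {G : Type*} [Group G] [TopologicalSpace G] [IsTopologicalGroup G]
    [CompactSpace G] [T2Space G] [MeasurableSpace G] [BorelSpace G]
    (lam : Measure G) [lam.IsHaarMeasure] [IsProbabilityMeasure lam] (y : G) :
    ∀ f : C(G × G, ℝ),
      Tendsto (fun P : BorelPartition G => ∫ z, f z ∂(partMeasure lam y P))
        atTop (nhds (∫ z, f z ∂(lam.map (fun x => (x, x * y))))) := by
  intro f
  have hfm : Measurable f := continuous_prod_measurable f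
  haveI hri : lam.IsMulRightInvariant := by
    constructor
    intro g
    haveI : IsProbabilityMeasure (lam.map (· * g)) :=
      Measure.isProbabilityMeasure_map (measurable_mul_const g).aemeasurable
    exact Measure.isHaarMeasure_eq_of_isProbabilityMeasure (lam.map (· * g)) lam
  have hbd : ∀ z : G × G, ‖f z‖ ≤ ‖f‖ := f.norm_coe_le_norm
  have hfi : Integrable f (lam.prod lam) :=
    ⟨hfm.aestronglyMeasurable, HasFiniteIntegral.of_bounded (C := ‖f‖) (.of_forall hbd)⟩
  have hglam : Integrable (fun x => f (x, x * y)) lam :=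
    ⟨(hfm.comp (measurable_id.prodMk (measurable_mul_const y))).aestronglyMeasurable,
      HasFiniteIntegral.of_bounded (C := ‖f‖) (.of_forall fun x => hbd _)⟩
  have hmap : ∫ z, f z ∂(lam.map (fun x => (x, x * y))) = ∫ x, f (x, x * y) ∂lam :=
    integral_map (measurable_id.prodMk (measurable_mul_const y)).aemeasurable
      hfm.aestronglyMeasurable
  rw [hmap, Metric.tendsto_nhds]
  intro ε hε
  obtain ⟨P₀, hP₀⟩ := exists_good_partition f y (half_pos hε)
  refine Filter.eventually_of_mem (Filter.mem_atTop P₀) fun P hP => ?_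
  have hgood : ∀ E ∈ P.parts, ∀ x ∈ E, ∀ x' ∈ E,
      |f (x, x' * y) - f (x, x * y)| ≤ ε / 2 := by
    intro E hE x hx x' hx'
    obtain ⟨E₀, hE₀, hsub⟩ := hP E hE
    exact hP₀ E₀ hE₀ x (hsub hx) x' (hsub hx')
  set s' := P.parts.filter (fun E => lam E ≠ 0) with hs'
  -- compute the LHS integral
  have hIP : ∫ z, f z ∂(partMeasure lam y P)
      = ∑ E ∈ s', (lam E)⁻¹.toReal * ∫ x in E, ∫ x' in E, f (x, x' * y) ∂lam ∂lam := by
    rw [partMeasure, integral_finset_sum_measure (fun E hE =>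
      (hfi.restrict).smul_measure
        (ENNReal.inv_ne_top.mpr (Finset.mem_filter.mp hE).2))]
    refine Finset.sum_congr rfl fun E hE => ?_
    rw [integral_smul_measure,
      integral_partPiece lam y f hfm hfi (P.meas E (Finset.mem_filter.mp hE).1),
      smul_eq_mul]
  -- decompose the RHS integral
  have hbiU : ⋃ E ∈ P.parts, E = Set.univ := by
    have hc := P.cover
    rw [Set.sUnion_eq_biUnion] at hc
    rw [← hc]
    exact (Finset.set_biUnion_coe P.parts fun E => E)
  have hLsum : ∫ x, f (x, x * y) ∂lam = ∑ E ∈ s', ∫ x in E, f (x, x * y) ∂lam := by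
    rw [← setIntegral_univ, ← hbiU,
      integral_biUnion_finset P.parts (fun E hE => P.meas E hE) P.disj
        (fun E _ => hglam.integrableOn), hs']
    rw [Finset.sum_filter_of_ne]
    intro E hE hne
    intro h0
    apply hne
    rw [Measure.restrict_eq_zero.mpr h0, integral_zero_measure]
  rw [hIP, hLsum, Real.dist_eq]
  -- per-part estimate
  have hper : ∀ E ∈ s',
      |(lam E)⁻¹.toReal * (∫ x in E, ∫ x' in E, f (x, x' * y) ∂lam ∂lam)
        - ∫ x in E, f (x, x * y) ∂lam| ≤ ε / 2 * (lam E).toReal := by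
    intro E hE
    obtain ⟨hEp, hE0⟩ := Finset.mem_filter.mp hE
    have hEm : MeasurableSet E := P.meas E hEp
    have hEfin : lam E ≠ ⊤ := measure_ne_top lam E
    set r : ℝ := (lam E).toReal with hr
    have hr0 : 0 < r := ENNReal.toReal_pos hE0 hEfin
    have hgE : Integrable (fun q : G × G => f (q.1, q.2 * y))
        ((lam.restrict E).prod (lam.restrict E)) :=
      ⟨(hfm.comp (measurable_fst.prodMk (measurable_snd.mul_const y))).aestronglyMeasurable,
        HasFiniteIntegral.of_bounded (C := ‖f‖) (.of_forall fun q => hbd _)⟩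
    have hF1 : IntegrableOn (fun x => ∫ x' in E, f (x, x' * y) ∂lam) E lam :=
      hgE.integral_prod_left
    have hg2 : IntegrableOn (fun x => f (x, x * y)) E lam := hglam.integrableOn
    have hinner : ∀ x ∈ E,
        ‖(∫ x' in E, f (x, x' * y) ∂lam) - r * f (x, x * y)‖ ≤ ε / 2 * r := by
      intro x hx
      have hix : IntegrableOn (fun x' => f (x, x' * y)) E lam :=
        (Integrable.integrableOn
          ⟨(hfm.comp (measurable_const.prodMk (measurable_mul_const y))).aestronglyMeasurable,
            HasFiniteIntegral.of_bounded (C := ‖f‖) (.of_forall fun x' => hbd _)⟩)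
      have hconst : ∫ (_ : G) in E, f (x, x * y) ∂lam = r * f (x, x * y) := by
        rw [setIntegral_const, smul_eq_mul]; rfl
      rw [← hconst, ← integral_sub hix ((integrable_const _).integrableOn)]
      apply norm_setIntegral_le_of_norm_le_const (measure_lt_top lam E)
      · intro x' hx'
        rw [Real.norm_eq_abs]
        exact hgood E hEp x hx x' hx'
    have houter : ‖(∫ x in E, (∫ x' in E, f (x, x' * y) ∂lam) ∂lam)
        - ∫ x in E, r * f (x, x * y) ∂lam‖ ≤ ε / 2 * r * r := by
      rw [← integral_sub hF1 (hg2.const_mul r)]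
      apply norm_setIntegral_le_of_norm_le_const (measure_lt_top lam E) hinner
    have hbE : ∫ x in E, f (x, x * y) ∂lam
        = r⁻¹ * ∫ x in E, r * f (x, x * y) ∂lam := by
      rw [MeasureTheory.integral_const_mul, ← mul_assoc, inv_mul_cancel₀ hr0.ne', one_mul]
    have htor : (lam E)⁻¹.toReal = r⁻¹ := by rw [ENNReal.toReal_inv]
    rw [htor, hbE, ← mul_sub, abs_mul, abs_of_nonneg (inv_nonneg.mpr hr0.le)]
    calc r⁻¹ * |(∫ x in E, (∫ x' in E, f (x, x' * y) ∂lam) ∂lam)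
          - ∫ x in E, r * f (x, x * y) ∂lam|
        ≤ r⁻¹ * (ε / 2 * r * r) := by
          apply mul_le_mul_of_nonneg_left _ (inv_nonneg.mpr hr0.le)
          rw [← Real.norm_eq_abs]
          exact houter
      _ = ε / 2 * r := by field_simp
  -- sum the measures
  have hsum1 : ∑ E ∈ s', (lam E).toReal ≤ 1 := by
    have h1 : ∑ E ∈ s', (lam E).toReal ≤ ∑ E ∈ P.parts, (lam E).toReal :=
      Finset.sum_le_sum_of_subset_of_nonneg (Finset.filter_subset _ _)
        (fun _ _ _ => ENNReal.toReal_nonneg)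
    have hdisj : (↑P.parts : Set (Set G)).PairwiseDisjoint (fun E : Set G => E) := P.disj
    have h3 : lam (⋃ E ∈ P.parts, E) = ∑ E ∈ P.parts, lam E :=
      measure_biUnion_finset hdisj (fun E hE => P.meas E hE)
    rw [hbiU, measure_univ] at h3
    have h2 : ∑ E ∈ P.parts, (lam E).toReal = 1 := by
      rw [← ENNReal.toReal_sum (fun E _ => measure_ne_top lam E), ← h3, ENNReal.toReal_one]
    rw [h2] at h1
    exact h1
  calc |(∑ E ∈ s', (lam E)⁻¹.toReal * ∫ x in E, ∫ x' in E, f (x, x' * y) ∂lam ∂lam)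
        - ∑ E ∈ s', ∫ x in E, f (x, x * y) ∂lam|
      = |∑ E ∈ s', ((lam E)⁻¹.toReal * (∫ x in E, ∫ x' in E, f (x, x' * y) ∂lam ∂lam)
          - ∫ x in E, f (x, x * y) ∂lam)| := by rw [Finset.sum_sub_distrib]
    _ ≤ ∑ E ∈ s', |(lam E)⁻¹.toReal * (∫ x in E, ∫ x' in E, f (x, x' * y) ∂lam ∂lam)
          - ∫ x in E, f (x, x * y) ∂lam| := Finset.abs_sum_le_sum_abs _ _
    _ ≤ ∑ E ∈ s', ε / 2 * (lam E).toReal := Finset.sum_le_sum hper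
    _ = ε / 2 * ∑ E ∈ s', (lam E).toReal := by rw [Finset.mul_sum]
    _ ≤ ε / 2 * 1 := by
        apply mul_le_mul_of_nonneg_left hsum1 (by linarith)
    _ < ε := by linarith
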